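/- Fix integers n ≥ 1 and N ≥ 0 and a constant c > 0. There exists a₁ > 0 (depending only on n, N, c) such that for every κ ≥ 0, every complex n×n matrix M all of whose entries satisfy |M_{ij}| ≤ c(1 + κᴺ), every ε ∈ (0,1), and every t ≥ 0: ‖exp(−M t)‖ ≤ (a₁ / ε^{n−1}) (1 + κ^{N(n−1)}) exp((λ + ε) t), where λ = max{−Re μ : μ an eigenvalue of M} and ‖·‖ denotes the spectral (ℓ²-operator) norm. -/

import Mathlib

open scoped BigOperators

/-- The spectral norm (ℓ²-operator norm) of a complex `n × n` matrix: the operator norm of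
the induced linear map on the Euclidean space `ℂⁿ`. -/
noncomputable def spectralNorm' {n : ℕ} (A : Matrix (Fin n) (Fin n) ℂ) : ℝ :=
  ‖LinearMap.toContinuousLinearMap (Matrix.toEuclideanLin A)‖

namespace SpectralBoundAux

open Polynomial NormedSpace intervalIntegral

/-! ### Scalar Putzer functions -/

noncomputable def putzerR (ν : ℕ → ℂ) : ℕ → ℝ → ℂ
  | 0 => fun t => Complex.exp (ν 0 * t)
  | (k+1) => fun t => Complex.exp (ν (k+1) * t) *
      ∫ s in (0:ℝ)..t, Complex.exp (-(ν (k+1)) * s) * putzerR ν k s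

lemma continuous_cexp_mul (c : ℂ) : Continuous fun t : ℝ => Complex.exp (c * t) := by
  fun_prop

lemma putzerR_continuous (ν : ℕ → ℂ) : ∀ k, Continuous (putzerR ν k)
  | 0 => continuous_cexp_mul (ν 0)
  | (k+1) => by
      have h1 := putzerR_continuous ν k
      have h2 : Continuous fun s : ℝ => Complex.exp (-(ν (k+1)) * s) * putzerR ν k s :=
        (continuous_cexp_mul _).mul h1
      exact (continuous_cexp_mul _).mul
        (intervalIntegral.continuous_primitive (fun a b => h2.intervalIntegrable a b) 0)

lemma hasDerivAt_cexp_mul (c : ℂ) (t : ℝ) :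
    HasDerivAt (fun t : ℝ => Complex.exp (c * t)) (c * Complex.exp (c * t)) t := by
  have h : HasDerivAt (fun z : ℂ => Complex.exp (c * z)) (c * Complex.exp (c * (t:ℂ))) (t:ℂ) := by
    exact ((hasDerivAt_id (t:ℂ)).const_mul c).cexp.congr_deriv (by simp only [id, mul_one]; ring)
  exact h.comp_ofReal

lemma putzerR_hasDerivAt_zero (ν : ℕ → ℂ) (t : ℝ) :
    HasDerivAt (putzerR ν 0) (ν 0 * putzerR ν 0 t) t := by
  simpa [putzerR] using hasDerivAt_cexp_mul (ν 0) t

lemma putzerR_hasDerivAt_succ (ν : ℕ → ℂ) (k : ℕ) (t : ℝ) :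
    HasDerivAt (putzerR ν (k+1))
      (ν (k+1) * putzerR ν (k+1) t + putzerR ν k t) t := by
  have hcont : Continuous fun s : ℝ => Complex.exp (-(ν (k+1)) * s) * putzerR ν k s :=
    (continuous_cexp_mul _).mul (putzerR_continuous ν k)
  have h2 : HasDerivAt (fun u : ℝ => ∫ s in (0:ℝ)..u, Complex.exp (-(ν (k+1)) * s) * putzerR ν k s)
      (Complex.exp (-(ν (k+1)) * t) * putzerR ν k t) t :=
    intervalIntegral.integral_hasDerivAt_right (hcont.intervalIntegrable _ _)
      (hcont.stronglyMeasurableAtFilter _ _) hcont.continuousAt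
  have h := (hasDerivAt_cexp_mul (ν (k+1)) t).mul h2
  have : putzerR ν (k+1) = fun u : ℝ => Complex.exp (ν (k+1) * u) *
      ∫ s in (0:ℝ)..u, Complex.exp (-(ν (k+1)) * s) * putzerR ν k s := rfl
  rw [this]
  refine h.congr_deriv (Eq.symm ?_)
  have hexp : Complex.exp (ν (k+1) * t) * Complex.exp (-(ν (k+1)) * t) = 1 := by
    rw [← Complex.exp_add]; ring_nf; exact Complex.exp_zero
  show ν (k+1) * putzerR ν (k+1) t + putzerR ν k t = _
  have : putzerR ν (k+1) t = Complex.exp (ν (k+1) * t) *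
      ∫ s in (0:ℝ)..t, Complex.exp (-(ν (k+1)) * s) * putzerR ν k s := rfl
  rw [this]
  have h3 : Complex.exp (ν (k+1) * t) * (Complex.exp (-(ν (k+1)) * t) * putzerR ν k t)
      = putzerR ν k t := by rw [← mul_assoc, hexp, one_mul]
  rw [h3, ← mul_assoc]

lemma putzerR_zero_init (ν : ℕ → ℂ) : putzerR ν 0 0 = 1 := by simp [putzerR]
lemma putzerR_succ_init (ν : ℕ → ℂ) (k : ℕ) : putzerR ν (k+1) 0 = 0 := by simp [putzerR]

lemma putzerR_bound (ν : ℕ → ℂ) (lam : ℝ) :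
    ∀ k, (∀ j, j ≤ k → (ν j).re ≤ lam) → ∀ t : ℝ, 0 ≤ t →
      ‖putzerR ν k t‖ ≤ t ^ k / k.factorial * Real.exp (lam * t)
  | 0 => by
      intro hν t ht
      have : ‖putzerR ν 0 t‖ = Real.exp ((ν 0).re * t) := by
        simp [putzerR, Complex.norm_exp, Complex.mul_re]
      rw [this]
      simp only [pow_zero, Nat.factorial_zero, Nat.cast_one, div_one, one_mul]
      exact Real.exp_le_exp.mpr (mul_le_mul_of_nonneg_right (hν 0 (le_refl 0)) ht)
  | (k+1) => by
      intro hν t ht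
      have IH := putzerR_bound ν lam k (fun j hj => hν j (hj.trans k.le_succ))
      set c := ν (k+1) with hc
      have hcre : c.re ≤ lam := hν (k+1) (le_refl _)
      have habs : ‖putzerR ν (k+1) t‖ = Real.exp (c.re * t) *
          ‖∫ s in (0:ℝ)..t, Complex.exp (-c * s) * putzerR ν k s‖ := by
        simp [putzerR, Complex.norm_exp, Complex.mul_re, hc]
      rw [habs]
      have hcont : Continuous fun s : ℝ => Complex.exp (-c * s) * putzerR ν k s :=
        (continuous_cexp_mul _).mul (putzerR_continuous ν k)
      have step1 : ‖∫ s in (0:ℝ)..t, Complex.exp (-c * s) * putzerR ν k s‖ ≤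
          ∫ s in (0:ℝ)..t, ‖Complex.exp (-c * s) * putzerR ν k s‖ := by
        simpa using intervalIntegral.norm_integral_le_integral_norm (f := fun s : ℝ =>
          Complex.exp (-c * s) * putzerR ν k s) ht
      have step2 : Real.exp (c.re * t) *
            (∫ s in (0:ℝ)..t, ‖Complex.exp (-c * s) * putzerR ν k s‖) ≤
          ∫ s in (0:ℝ)..t, Real.exp (lam * t) * (s ^ k / k.factorial) := by
        rw [← intervalIntegral.integral_const_mul]
        apply intervalIntegral.integral_mono_on ht
        · exact ((continuous_const.mul (hcont.norm)).intervalIntegrable 0 t)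
        · exact ((continuous_const.mul ((continuous_pow k).div_const _)).intervalIntegrable 0 t)
        · intro s hs
          obtain ⟨hs0, hst⟩ := hs
          have h1 : ‖Complex.exp (-c * s) * putzerR ν k s‖ =
              Real.exp (-(c.re) * s) * ‖putzerR ν k s‖ := by
            simp [Complex.norm_exp, Complex.mul_re]
          rw [h1, ← mul_assoc, ← Real.exp_add]
          have h2 : Real.exp (c.re * t + -c.re * s) * ‖putzerR ν k s‖ ≤
              Real.exp (lam * (t - s)) * (s ^ k / k.factorial * Real.exp (lam * s)) := by
            apply mul_le_mul
            · apply Real.exp_le_exp.mpr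
              have : c.re * t + -c.re * s = c.re * (t - s) := by ring
              rw [this]
              exact mul_le_mul_of_nonneg_right hcre (by linarith)
            · exact IH s hs0
            · exact norm_nonneg _
            · exact Real.exp_nonneg _
          refine h2.trans (le_of_eq ?_)
          rw [mul_comm (s ^ k / (k.factorial:ℝ)) (Real.exp (lam * s)), ← mul_assoc,
            ← Real.exp_add]
          congr 2
          ring
      calc Real.exp (c.re * t) *
            ‖∫ s in (0:ℝ)..t, Complex.exp (-c * s) * putzerR ν k s‖
            ≤ Real.exp (c.re * t) *
              (∫ s in (0:ℝ)..t, ‖Complex.exp (-c * s) * putzerR ν k s‖) := by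
              exact mul_le_mul_of_nonneg_left step1 (Real.exp_nonneg _)
        _ ≤ ∫ s in (0:ℝ)..t, Real.exp (lam * t) * (s ^ k / k.factorial) := step2
        _ = Real.exp (lam * t) * ((t ^ (k+1) - 0 ^ (k+1)) / (k+1) / k.factorial) := by
              rw [intervalIntegral.integral_const_mul, intervalIntegral.integral_div,
                integral_pow]
        _ ≤ t ^ (k+1) / (k+1).factorial * Real.exp (lam * t) := by
              rw [Nat.factorial_succ, zero_pow (Nat.succ_ne_zero k), mul_comm]
              apply le_of_eq
              congr 1
              push_cast
              field_simp
              rw [sub_zero]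

/-! ### Roots of the characteristic polynomial -/

lemma list_prod_eq {M : Type*} [CommMonoid M] (f : ℂ → M) :
    ∀ (l : List ℂ), (l.map f).prod = ∏ j ∈ Finset.range l.length, f (l.getD j 0)
  | [] => by simp
  | (a :: l) => by
      rw [List.map_cons, List.prod_cons, list_prod_eq f l, List.length_cons,
        Finset.prod_range_succ']
      simp [mul_comm]

lemma charpoly_factor {n : ℕ} (A : Matrix (Fin n) (Fin n) ℂ) :
    ∃ ν : ℕ → ℂ, (∀ j, j < n → (Matrix.charpoly A).IsRoot (ν j)) ∧
      Matrix.charpoly A = ∏ j ∈ Finset.range n, (X - C (ν j)) := by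
  have hmonic := Matrix.charpoly_monic A
  have hsplits : (Matrix.charpoly A).Splits := IsAlgClosed.splits _
  have hdeg : (Matrix.charpoly A).natDegree = n := by
    rw [Matrix.charpoly_natDegree_eq_dim, Fintype.card_fin]
  have hcard : (Matrix.charpoly A).roots.card = n := by
    rw [Polynomial.splits_iff_card_roots.mp hsplits, hdeg]
  set l := (Matrix.charpoly A).roots.toList with hl
  have hlen : l.length = n := by
    rw [hl, Multiset.length_toList, hcard]
  refine ⟨fun j => l.getD j 0, ?_, ?_⟩
  · intro j hj
    have hmem : l.getD j 0 ∈ l := by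
      rw [List.getD_eq_getElem l 0 (by rw [hlen]; exact hj)]
      exact List.getElem_mem _
    have : l.getD j 0 ∈ (Matrix.charpoly A).roots := by
      rwa [hl, Multiset.mem_toList] at hmem
    exact Polynomial.isRoot_of_mem_roots this
  · have hfac := hsplits.eq_prod_roots_of_monic hmonic
    rw [hfac]
    have hcoe : (Matrix.charpoly A).roots = (l : Multiset ℂ) := by
      rw [hl, Multiset.coe_toList]
    rw [hcoe, Multiset.map_coe, Multiset.prod_coe, list_prod_eq, hlen]

section MatrixAux
open scoped Matrix.Norms.L2Operator
variable {n : ℕ}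

lemma spectralNorm'_eq (A : Matrix (Fin n) (Fin n) ℂ) : spectralNorm' A = ‖A‖ := rfl

lemma charpoly_eval (M : Matrix (Fin n) (Fin n) ℂ) (z : ℂ) :
    (Matrix.charpoly M).eval z = (z • (1 : Matrix (Fin n) (Fin n) ℂ) - M).det := by
  rw [Matrix.charpoly, ← Polynomial.coe_evalRingHom, RingHom.map_det]
  congr 1
  ext i j
  rcases eq_or_ne i j with rfl | h
  · simp [Matrix.charmatrix_apply_eq, Matrix.one_apply]
  · simp [Matrix.charmatrix_apply_ne _ _ _ h, Matrix.one_apply, h]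

lemma root_abs_le_norm (A : Matrix (Fin n) (Fin n) ℂ) (z : ℂ)
    (hz : (Matrix.charpoly A).IsRoot z) : ‖z‖ ≤ ‖A‖ := by
  have hdet : (z • (1 : Matrix (Fin n) (Fin n) ℂ) - A).det = 0 := by
    rw [← charpoly_eval]; exact hz
  obtain ⟨v, hv, hv0⟩ := (Matrix.exists_mulVec_eq_zero_iff).mpr hdet
  have hAv : A.mulVec v = z • v := by
    have h := hv0
    rw [Matrix.sub_mulVec, Matrix.smul_mulVec, Matrix.one_mulVec, sub_eq_zero] at h
    exact h.symm
  set x : EuclideanSpace ℂ (Fin n) := (WithLp.equiv 2 _).symm v with hx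
  have hxn : x ≠ 0 := by
    simp only [hx, ne_eq, EmbeddingLike.map_eq_zero_iff]
    exact fun h => hv (by simpa using congrArg WithLp.ofLp h)
  have key : Matrix.toEuclideanCLM (𝕜 := ℂ) A x = z • x := by
    rw [hx]
    change WithLp.toLp 2 (Matrix.mulVec A v) = _
    rw [hAv]
    rfl
  have hb := (Matrix.toEuclideanCLM (𝕜 := ℂ) A).le_opNorm x
  rw [key, norm_smul] at hb
  change _ ≤ ‖A‖ * ‖x‖ at hb
  have hxpos : 0 < ‖x‖ := norm_pos_iff.mpr hxn
  have := le_of_mul_le_mul_right hb hxpos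
  simpa using this

lemma norm_stdBasisMatrix_le (i j : Fin n) (z : ℂ) :
    ‖Matrix.single i j z‖ ≤ ‖z‖ := by
  change ‖Matrix.toEuclideanCLM (𝕜 := ℂ) (Matrix.single i j z)‖ ≤ _
  apply ContinuousLinearMap.opNorm_le_bound _ (norm_nonneg z)
  intro x
  set v : Fin n → ℂ := WithLp.equiv 2 _ x with hv
  have hx : x = (WithLp.equiv 2 _).symm v := rfl
  have happ : Matrix.toEuclideanCLM (𝕜 := ℂ) (Matrix.single i j z) x =
      (WithLp.equiv 2 _).symm (Function.update (0 : Fin n → ℂ) i (z * v j)) := by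
    rw [hx]
    change WithLp.toLp 2 (Matrix.mulVec (Matrix.single i j z) v) = _
    rw [Matrix.single_mulVec]
    rfl
  rw [happ]
  have hsingle : ((WithLp.equiv 2 (∀ _ : Fin n, ℂ)).symm
      (Function.update (0 : Fin n → ℂ) i (z * v j)))
      = EuclideanSpace.single i (z * v j) := rfl
  rw [hsingle, EuclideanSpace.norm_single]
  have hvj : ‖v j‖ ≤ ‖x‖ := by
    have h1 : ‖v j‖ = Real.sqrt (‖v j‖ ^ 2) := (Real.sqrt_sq (norm_nonneg _)).symm
    rw [h1, EuclideanSpace.norm_eq]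
    apply Real.sqrt_le_sqrt
    apply Finset.single_le_sum (f := fun k => ‖x k‖ ^ 2) (fun k _ => sq_nonneg _)
      (Finset.mem_univ j)
  calc ‖z * v j‖ = ‖z‖ * ‖v j‖ := by simp
    _ ≤ ‖z‖ * ‖x‖ := mul_le_mul_of_nonneg_left hvj (norm_nonneg z)

lemma norm_le_sum (A : Matrix (Fin n) (Fin n) ℂ) :
    ‖A‖ ≤ ∑ i : Fin n, ∑ j : Fin n, ‖A i j‖ := by
  conv_lhs => rw [Matrix.matrix_eq_sum_single A]
  refine (norm_sum_le _ _).trans ?_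
  apply Finset.sum_le_sum
  intro i _
  refine (norm_sum_le _ _).trans ?_
  exact Finset.sum_le_sum fun j _ => norm_stdBasisMatrix_le i j (A i j)

/-! ### Putzer's formula -/

noncomputable def putzerP (A : Matrix (Fin n) (Fin n) ℂ) (ν : ℕ → ℂ) (k : ℕ) :
    Matrix (Fin n) (Fin n) ℂ :=
  Polynomial.aeval A (∏ j ∈ Finset.range k, (X - C (ν j)))

lemma putzerP_zero (A : Matrix (Fin n) (Fin n) ℂ) (ν : ℕ → ℂ) : putzerP A ν 0 = 1 := by
  simp [putzerP]

lemma putzerP_succ (A : Matrix (Fin n) (Fin n) ℂ) (ν : ℕ → ℂ) (k : ℕ) :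
    putzerP A ν (k+1) = putzerP A ν k * (A - ν k • 1) := by
  rw [putzerP, Finset.prod_range_succ, map_mul]
  congr 1
  rw [map_sub, aeval_X, aeval_C, Algebra.algebraMap_eq_smul_one]

lemma mul_putzerP (A : Matrix (Fin n) (Fin n) ℂ) (ν : ℕ → ℂ) (k : ℕ) :
    A * putzerP A ν k = putzerP A ν (k+1) + ν k • putzerP A ν k := by
  have hcomm : A * putzerP A ν k = putzerP A ν k * A := by
    rw [putzerP]
    have h1 : A * Polynomial.aeval A (∏ j ∈ Finset.range k, (X - C (ν j)))
        = Polynomial.aeval A (X * ∏ j ∈ Finset.range k, (X - C (ν j))) := by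
      rw [map_mul, aeval_X]
    have h2 : Polynomial.aeval A ((∏ j ∈ Finset.range k, (X - C (ν j))) * X)
        = Polynomial.aeval A (∏ j ∈ Finset.range k, (X - C (ν j))) * A := by
      rw [map_mul, aeval_X]
    rw [h1, ← h2, mul_comm X]
  rw [hcomm, putzerP_succ, mul_sub, mul_smul_comm, mul_one]
  abel

lemma putzerP_n (A : Matrix (Fin n) (Fin n) ℂ) (ν : ℕ → ℂ)
    (hchar : Matrix.charpoly A = ∏ j ∈ Finset.range n, (X - C (ν j))) :
    putzerP A ν n = 0 := by
  rw [putzerP, ← hchar, Matrix.aeval_self_charpoly]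

lemma putzerP_norm_le (A : Matrix (Fin n) (Fin n) ℂ) (ν : ℕ → ℂ) (B : ℝ) (hB1 : 1 ≤ B)
    (hone : ‖(1 : Matrix (Fin n) (Fin n) ℂ)‖ ≤ 1) :
    ∀ k, (∀ j, j < k → ‖A - ν j • 1‖ ≤ B) → ‖putzerP A ν k‖ ≤ B ^ k
  | 0 => fun _ => by simpa [putzerP_zero] using hone
  | (k+1) => fun hm => by
      rw [putzerP_succ, pow_succ]
      exact (norm_mul_le _ _).trans (mul_le_mul
        (putzerP_norm_le A ν B hB1 hone k (fun j hj => hm j (hj.trans k.lt_succ_self)))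
        (hm k k.lt_succ_self) (norm_nonneg _) (pow_nonneg (zero_le_one.trans hB1) _))

lemma putzer_exp_eq (hn : 0 < n) (A : Matrix (Fin n) (Fin n) ℂ) (ν : ℕ → ℂ)
    (hchar : Matrix.charpoly A = ∏ j ∈ Finset.range n, (X - C (ν j))) (t : ℝ) :
    exp (t • A) = ∑ k ∈ Finset.range n, putzerR ν k t • putzerP A ν k := by
  haveI : CompleteSpace (Matrix (Fin n) (Fin n) ℂ) := FiniteDimensional.complete ℂ _
  set Φ : ℝ → Matrix (Fin n) (Fin n) ℂ :=
    fun t => ∑ k ∈ Finset.range n, putzerR ν k t • putzerP A ν k with hΦ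
  have hΦd : ∀ t : ℝ, HasDerivAt Φ (A * Φ t) t := by
    intro t
    have hterm : ∀ k ∈ Finset.range n, HasDerivAt (fun u => putzerR ν k u • putzerP A ν k)
        ((ν k * putzerR ν k t + (if k = 0 then 0 else putzerR ν (k-1) t)) • putzerP A ν k) t := by
      intro k _
      match k with
      | 0 => simpa using (putzerR_hasDerivAt_zero ν t).smul_const (putzerP A ν 0)
      | (k+1) => simpa using (putzerR_hasDerivAt_succ ν k t).smul_const (putzerP A ν (k+1))
    have hsum := HasDerivAt.fun_sum hterm
    refine hsum.congr_deriv (Eq.symm ?_)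
    obtain ⟨m, rfl⟩ : ∃ m, n = m + 1 := ⟨n - 1, (Nat.succ_pred_eq_of_pos hn).symm⟩
    have hAΦ : A * Φ t = ∑ k ∈ Finset.range (m+1),
        (putzerR ν k t • putzerP A ν (k+1) + (ν k * putzerR ν k t) • putzerP A ν k) := by
      rw [hΦ, Finset.mul_sum]
      apply Finset.sum_congr rfl
      intro k _
      rw [mul_smul_comm, mul_putzerP, smul_add, smul_smul, mul_comm (putzerR ν k t) (ν k)]
    rw [hAΦ, Finset.sum_add_distrib]
    have hshift : ∑ k ∈ Finset.range (m+1), putzerR ν k t • putzerP A ν (k+1)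
        = ∑ k ∈ Finset.range (m+1), (if k = 0 then 0 else putzerR ν (k-1) t) • putzerP A ν k := by
      rw [Finset.sum_range_succ, Finset.sum_range_succ']
      simp only [Nat.succ_ne_zero, if_false, Nat.add_sub_cancel, if_pos rfl, zero_smul, add_zero]
      rw [putzerP_n A ν hchar, smul_zero, add_zero]
      simp
    rw [hshift, ← Finset.sum_add_distrib]
    apply Finset.sum_congr rfl
    intro k _
    rw [← add_smul]
    congr 1
    ring
  have hΦ0 : Φ 0 = 1 := by
    show ∑ k ∈ Finset.range n, putzerR ν k 0 • putzerP A ν k = 1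
    rw [Finset.sum_eq_single 0]
    · rw [putzerR_zero_init, putzerP_zero, one_smul]
    · intro k _ hk
      match k, hk with
      | (k+1), _ => rw [putzerR_succ_init, zero_smul]
    · intro h
      exact absurd (Finset.mem_range.mpr hn) h
  set F : ℝ → Matrix (Fin n) (Fin n) ℂ := fun u => exp (u • A) with hF
  have hFd : ∀ u : ℝ, HasDerivAt F (F u * A) u := by
    intro u
    have := hasDerivAt_exp_smul_const (𝕂 := ℝ) A u
    exact this
  have hg : ∀ u : ℝ, HasDerivAt (fun u => F (-u) * Φ u) 0 u := by
    intro u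
    have h1 : HasDerivAt (fun u : ℝ => F (-u)) ((-1 : ℝ) • (F (-u) * A)) u :=
      (hFd (-u)).scomp u (hasDerivAt_neg u)
    have h2 := h1.mul (hΦd u)
    refine h2.congr_deriv ?_
    simp [mul_assoc]
  have hconst : ∀ u : ℝ, F (-u) * Φ u = 1 := by
    have hcc := is_const_of_deriv_eq_zero (f := fun u => F (-u) * Φ u)
      (fun u => (hg u).differentiableAt) (fun u => (hg u).deriv)
    intro u
    calc F (-u) * Φ u = F (-0) * Φ 0 := hcc u 0
      _ = 1 := by
          rw [neg_zero, hΦ0, mul_one]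
          show exp ((0:ℝ) • A) = 1
          rw [zero_smul, exp_zero]
  have hFF : F t * F (-t) = 1 := by
    rw [hF]
    rw [← Matrix.exp_add_of_commute _ _ (((Commute.refl A).smul_left t).smul_right (-t))]
    rw [← add_smul, add_neg_cancel, zero_smul, exp_zero]
  calc exp (t • A) = F t * (F (-t) * Φ t) := by rw [hconst t, mul_one]
    _ = (F t * F (-t)) * Φ t := by rw [mul_assoc]
    _ = Φ t := by rw [hFF, one_mul]

/-! ### The quantitative bound -/

lemma exp_norm_bound (hn : 0 < n) (A : Matrix (Fin n) (Fin n) ℂ) (lam K : ℝ)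
    (hroot : ∀ z : ℂ, (Matrix.charpoly A).IsRoot z → z.re ≤ lam)
    (hK : ‖A‖ ≤ K) (ε t : ℝ) (hε : 0 < ε) (hε1 : ε ≤ 1) (ht : 0 ≤ t) :
    ‖exp (t • A)‖ ≤
      (n : ℝ) * ((2*K+1) ^ (n-1) / ε ^ (n-1)) * Real.exp ((lam + ε) * t) := by
  haveI : Nonempty (Fin n) := ⟨⟨0, hn⟩⟩
  have hK0 : 0 ≤ K := (norm_nonneg A).trans hK
  obtain ⟨ν, hν, hchar⟩ := charpoly_factor A
  have hone : ‖(1 : Matrix (Fin n) (Fin n) ℂ)‖ ≤ 1 := le_of_eq CStarRing.norm_one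
  set B : ℝ := 2*K+1 with hB
  have hB1 : (1:ℝ) ≤ B := by rw [hB]; linarith
  have hAν : ∀ j, j < n → ‖A - ν j • 1‖ ≤ B := by
    intro j hj
    calc ‖A - ν j • 1‖ ≤ ‖A‖ + ‖ν j • (1 : Matrix (Fin n) (Fin n) ℂ)‖ := norm_sub_le _ _
      _ ≤ K + ‖ν j‖ * 1 := by
          rw [norm_smul]
          exact add_le_add hK (mul_le_mul_of_nonneg_left hone (norm_nonneg _))
      _ ≤ 2*K + 1 := by
          have := (root_abs_le_norm A (ν j) (hν j hj)).trans hK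
          linarith
  rw [putzer_exp_eq hn A ν hchar t]
  have hterm : ∀ k ∈ Finset.range n, ‖putzerR ν k t • putzerP A ν k‖ ≤
      B ^ (n-1) / ε ^ (n-1) * Real.exp ((lam + ε) * t) := by
    intro k hk
    have hkn : k < n := Finset.mem_range.mp hk
    have hkn1 : k ≤ n - 1 := Nat.le_pred_of_lt hkn
    have hr : ‖putzerR ν k t‖ ≤ t ^ k / k.factorial * Real.exp (lam * t) :=
      putzerR_bound ν lam k (fun j hj => hroot (ν j) (hν j (lt_of_le_of_lt hj hkn))) t ht
    have hP : ‖putzerP A ν k‖ ≤ B ^ k :=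
      putzerP_norm_le A ν B hB1 hone k (fun j hj => hAν j (hj.trans hkn))
    have htk : t ^ k / k.factorial ≤ Real.exp (ε * t) / ε ^ (n-1) := by
      have h1 : (ε*t) ^ k / k.factorial ≤ Real.exp (ε*t) := by
        calc (ε*t) ^ k / k.factorial
            ≤ ∑ i ∈ Finset.range (k+1), (ε*t) ^ i / i.factorial := by
              apply Finset.single_le_sum (f := fun i => (ε*t) ^ i / (i.factorial : ℝ))
                (fun i _ => by positivity) (Finset.self_mem_range_succ k)
          _ ≤ Real.exp (ε*t) := Real.sum_le_exp_of_nonneg (by positivity) _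
      have h2 : t ^ k / k.factorial = ((ε*t) ^ k / k.factorial) / ε ^ k := by
        rw [mul_pow]
        field_simp
      rw [h2]
      have hεk : ε ^ (n-1) ≤ ε ^ k := pow_le_pow_of_le_one hε.le hε1 hkn1
      calc ((ε*t) ^ k / k.factorial) / ε ^ k ≤ Real.exp (ε*t) / ε ^ k := by
            gcongr
        _ ≤ Real.exp (ε*t) / ε ^ (n-1) :=
            div_le_div_of_nonneg_left (Real.exp_nonneg _) (pow_pos hε _) hεk
    calc ‖putzerR ν k t • putzerP A ν k‖
        = ‖putzerR ν k t‖ * ‖putzerP A ν k‖ := by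
          rw [norm_smul]
      _ ≤ (t ^ k / k.factorial * Real.exp (lam * t)) * B ^ k := by
          apply mul_le_mul hr hP (norm_nonneg _) (by positivity)
      _ ≤ (Real.exp (ε * t) / ε ^ (n-1) * Real.exp (lam * t)) * B ^ (n-1) := by
          apply mul_le_mul (mul_le_mul_of_nonneg_right htk (Real.exp_nonneg _))
            (pow_le_pow_right₀ hB1 hkn1) (by positivity) (by positivity)
      _ = B ^ (n-1) / ε ^ (n-1) * Real.exp ((lam + ε) * t) := by
          rw [add_mul, Real.exp_add]
          ring
  calc ‖∑ k ∈ Finset.range n, putzerR ν k t • putzerP A ν k‖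
      ≤ ∑ k ∈ Finset.range n, ‖putzerR ν k t • putzerP A ν k‖ := norm_sum_le _ _
    _ ≤ ∑ _k ∈ Finset.range n, B ^ (n-1) / ε ^ (n-1) * Real.exp ((lam + ε) * t) :=
        Finset.sum_le_sum hterm
    _ = (n : ℝ) * ((2*K+1) ^ (n-1) / ε ^ (n-1)) * Real.exp ((lam + ε) * t) := by
        rw [Finset.sum_const, Finset.card_range, nsmul_eq_mul, hB, mul_assoc]

lemma one_add_pow_le (x : ℝ) (hx : 0 ≤ x) (m : ℕ) : (1+x)^m ≤ 2^m * (1+x^m) := by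
  rcases le_total x 1 with h | h
  · calc (1+x)^m ≤ 2^m := pow_le_pow_left₀ (by linarith) (by linarith) m
      _ ≤ 2^m * (1+x^m) := le_mul_of_one_le_right (by positivity)
          (by linarith [pow_nonneg hx m])
  · calc (1+x)^m ≤ (2*x)^m := pow_le_pow_left₀ (by linarith) (by linarith) m
      _ = 2^m * x^m := mul_pow 2 x m
      _ ≤ 2^m * (1+x^m) := by
          have : (0:ℝ) < 2^m := by positivity
          nlinarith

lemma main_aux (n N : ℕ) (hn : 1 ≤ n) (c : ℝ) (hc : 0 < c) :
    ∃ a₁ : ℝ, 0 < a₁ ∧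
      ∀ (κ : ℝ), 0 ≤ κ →
      ∀ M : Matrix (Fin n) (Fin n) ℂ,
        (∀ i j, ‖M i j‖ ≤ c * (1 + κ ^ N)) →
      ∀ ε : ℝ, ε ∈ Set.Ioo (0 : ℝ) 1 →
      ∀ t : ℝ, 0 ≤ t →
        spectralNorm' (NormedSpace.exp ((-(t : ℂ)) • M)) ≤
          (a₁ / ε ^ (n - 1)) * (1 + κ ^ (N * (n - 1))) *
            Real.exp ((sSup {r : ℝ | ∃ μ : ℂ, M.charpoly.IsRoot μ ∧ r = -μ.re} + ε) * t) := by
  have hn0 : 0 < n := hn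
  have hnR : (0:ℝ) < n := by exact_mod_cast hn0
  refine ⟨(n : ℝ) * (2*(n:ℝ)^2*c+1)^(n-1) * 2^(n-1), by positivity, ?_⟩
  intro κ hκ M hM ε hε t ht
  set A : Matrix (Fin n) (Fin n) ℂ := -M with hA
  set S : Set ℝ := {r : ℝ | ∃ μ : ℂ, M.charpoly.IsRoot μ ∧ r = -μ.re} with hS
  have hfin : {μ : ℂ | M.charpoly.IsRoot μ}.Finite := by
    apply Set.not_infinite.mp
    intro h
    exact (Matrix.charpoly_monic M).ne_zero (Polynomial.eq_zero_of_infinite_isRoot _ h)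
  have hSfin : S.Finite := by
    have himg : S = (fun μ : ℂ => -μ.re) '' {μ : ℂ | M.charpoly.IsRoot μ} := by
      ext r
      constructor
      · rintro ⟨μ, h1, rfl⟩; exact ⟨μ, h1, rfl⟩
      · rintro ⟨μ, h1, rfl⟩; exact ⟨μ, h1, rfl⟩
    rw [himg]
    exact hfin.image _
  have hbdd : BddAbove S := hSfin.bddAbove
  have hroot : ∀ z : ℂ, (Matrix.charpoly A).IsRoot z → z.re ≤ sSup S := by
    intro z hz
    have h1 : Polynomial.eval z (Matrix.charpoly A) = 0 := hz
    rw [charpoly_eval] at h1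
    have hz' : M.charpoly.IsRoot (-z) := by
      show Polynomial.eval (-z) (Matrix.charpoly M) = 0
      rw [charpoly_eval]
      have harg : (-z) • (1 : Matrix (Fin n) (Fin n) ℂ) - M
          = -(z • (1 : Matrix (Fin n) (Fin n) ℂ) - A) := by
        rw [hA, neg_smul]
        abel
      rw [harg, Matrix.det_neg, h1, mul_zero]
    exact le_csSup hbdd ⟨-z, hz', by simp⟩
  have hK : ‖A‖ ≤ (n:ℝ)^2 * (c * (1 + κ^N)) := by
    refine (norm_le_sum A).trans ?_
    calc ∑ i : Fin n, ∑ j : Fin n, ‖A i j‖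
        ≤ ∑ _i : Fin n, ∑ _j : Fin n, c * (1+κ^N) := by
          apply Finset.sum_le_sum
          intro i _
          apply Finset.sum_le_sum
          intro j _
          have : A i j = -(M i j) := rfl
          rw [this, norm_neg]
          exact hM i j
      _ = (n:ℝ)^2 * (c*(1+κ^N)) := by
          simp [Finset.sum_const, Finset.card_univ]
          ring
  have hmain := exp_norm_bound hn0 A (sSup S) ((n:ℝ)^2*(c*(1+κ^N))) hroot hK ε t
    hε.1 hε.2.le ht
  have harg2 : (-(t:ℂ)) • M = t • A := by
    rw [neg_smul, ← smul_neg, Complex.coe_smul, ← hA]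
  rw [harg2, spectralNorm'_eq]
  refine hmain.trans ?_
  set K : ℝ := (n:ℝ)^2*(c*(1+κ^N)) with hKdef
  have hE : (0:ℝ) ≤ Real.exp ((sSup S + ε) * t) := Real.exp_nonneg _
  have key : (n:ℝ) * ((2*K+1) ^ (n-1) / ε ^ (n-1)) ≤
      ((n : ℝ) * (2*(n:ℝ)^2*c+1)^(n-1) * 2^(n-1)) / ε ^ (n-1) * (1 + κ ^ (N * (n-1))) := by
    have hx : (0:ℝ) ≤ κ ^ N := pow_nonneg hκ N
    have h1 : 2*K+1 ≤ (2*(n:ℝ)^2*c+1) * (1+κ^N) := by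
      rw [hKdef]
      nlinarith
    have h2 : (2*K+1) ^ (n-1) ≤ ((2*(n:ℝ)^2*c+1) * (1+κ^N)) ^ (n-1) := by
      apply pow_le_pow_left₀ (by positivity) h1
    have h4 : (1+κ^N) ^ (n-1) ≤ 2^(n-1) * (1 + κ ^ (N * (n-1))) := by
      have := one_add_pow_le (κ^N) hx (n-1)
      rwa [← pow_mul] at this
    have h5 : (2*K+1) ^ (n-1) ≤ (2*(n:ℝ)^2*c+1)^(n-1) * (2^(n-1) * (1 + κ ^ (N * (n-1)))) := by
      refine h2.trans ?_
      rw [mul_pow]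
      exact mul_le_mul_of_nonneg_left h4 (by positivity)
    calc (n:ℝ) * ((2*K+1) ^ (n-1) / ε ^ (n-1))
        = (n:ℝ) * (2*K+1) ^ (n-1) / ε ^ (n-1) := by ring
      _ ≤ (n:ℝ) * ((2*(n:ℝ)^2*c+1)^(n-1) * (2^(n-1) * (1 + κ ^ (N * (n-1))))) / ε ^ (n-1) := by
          exact (div_le_div_iff_of_pos_right (pow_pos hε.1 _)).mpr
            (mul_le_mul_of_nonneg_left h5 hnR.le)
      _ = ((n : ℝ) * (2*(n:ℝ)^2*c+1)^(n-1) * 2^(n-1)) / ε ^ (n-1) * (1 + κ ^ (N * (n-1))) := by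
          ring
  calc (n:ℝ) * ((2*K+1) ^ (n-1) / ε ^ (n-1)) * Real.exp ((sSup S + ε) * t)
      ≤ ((n : ℝ) * (2*(n:ℝ)^2*c+1)^(n-1) * 2^(n-1)) / ε ^ (n-1) * (1 + κ ^ (N * (n-1))) *
        Real.exp ((sSup S + ε) * t) := mul_le_mul_of_nonneg_right key hE

end MatrixAux
end SpectralBoundAux

/-- Fix `n ≥ 1`, `N ≥ 0` and `c > 0`.  There exists `a₁ > 0` (depending
only on `n`, `N`, `c`) such that for every `κ ≥ 0`, every complex `n × n` matrix `M` with
`|M_{ij}| ≤ c(1 + κᴺ)`, every `ε ∈ (0,1)` and every `t ≥ 0`,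
`‖exp(−Mt)‖ ≤ (a₁/ε^{n−1})(1 + κ^{N(n−1)}) exp((λ + ε)t)`, where
`λ = max{−Re μ : μ eigenvalue of M}` and `‖·‖` is the spectral norm. -/
theorem matrix_exponential_spectral_norm_bound (n N : ℕ) (hn : 1 ≤ n) (c : ℝ) (hc : 0 < c) :
    ∃ a₁ : ℝ, 0 < a₁ ∧
      ∀ (κ : ℝ), 0 ≤ κ →
      ∀ M : Matrix (Fin n) (Fin n) ℂ,
        (∀ i j, ‖M i j‖ ≤ c * (1 + κ ^ N)) →
      ∀ ε : ℝ, ε ∈ Set.Ioo (0 : ℝ) 1 →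
      ∀ t : ℝ, 0 ≤ t →
        spectralNorm' (NormedSpace.exp ((-(t : ℂ)) • M)) ≤
          (a₁ / ε ^ (n - 1)) * (1 + κ ^ (N * (n - 1))) *
            Real.exp ((sSup {r : ℝ | ∃ μ : ℂ, M.charpoly.IsRoot μ ∧ r = -μ.re} + ε) * t) :=
  SpectralBoundAux.main_aux n N hn c hc
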